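/- Let K be a finite field with q elements and n ≥ 1 an integer with q ≥ 2n − 2. Then the symmetric bilinear complexity of the multiplication map of the quotient algebra K[x]/(x^n), viewed as a symmetric K-bilinear map, is at most 2n − 1. -/

import Mathlib

namespace Stmt12Aux
open Polynomial Finset

lemma interp_aux {K : Type*} [Field K] (m : ℕ) (v : Fin m → K) (hv : Function.Injective v)
    (p : K[X]) (hp : p.natDegree ≤ m) :
    p = (∑ i, C (p.eval (v i)) * Lagrange.basis Finset.univ v i)
        + C (p.coeff m) * Lagrange.nodal Finset.univ v := by
  have hvs : Set.InjOn v (Finset.univ : Finset (Fin m)) := hv.injOn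
  set r : K[X] := p - C (p.coeff m) * Lagrange.nodal Finset.univ v with hr
  have hnd : (Lagrange.nodal (Finset.univ : Finset (Fin m)) v).natDegree = m := by
    rw [Lagrange.natDegree_nodal, Finset.card_univ, Fintype.card_fin]
  have hcoeffm : (Lagrange.nodal (Finset.univ : Finset (Fin m)) v).coeff m = 1 := by
    have := (Lagrange.nodal_monic (s := (Finset.univ : Finset (Fin m))) (v := v)).coeff_natDegree
    rwa [hnd] at this
  have hrdeg : r.degree < (m : WithBot ℕ) := by
    rw [Polynomial.degree_lt_iff_coeff_zero]
    intro k hk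
    rcases eq_or_lt_of_le hk with h | h
    · subst h
      simp [hr, hcoeffm]
    · have h1 : p.coeff k = 0 := Polynomial.coeff_eq_zero_of_natDegree_lt (lt_of_le_of_lt hp h)
      have h2 : (Lagrange.nodal (Finset.univ : Finset (Fin m)) v).coeff k = 0 :=
        Polynomial.coeff_eq_zero_of_natDegree_lt (by rw [hnd]; exact h)
      simp [hr, h1, h2]
  have hrdeg' : r.degree < (#(Finset.univ : Finset (Fin m)) : WithBot ℕ) := by
    rwa [Finset.card_univ, Fintype.card_fin]
  have key := Lagrange.eq_interpolate hvs hrdeg'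
  rw [Lagrange.interpolate_apply] at key
  have hev : ∀ i : Fin m, r.eval (v i) = p.eval (v i) := by
    intro i
    simp [hr, Lagrange.eval_nodal_at_node (Finset.mem_univ i)]
  calc p = r + C (p.coeff m) * Lagrange.nodal Finset.univ v := by rw [hr]; ring
    _ = _ := by
        rw [key]
        congr 1
        exact Finset.sum_congr rfl fun i _ => by rw [hev]

lemma coeff_mul_top {K : Type*} [Field K] {f g : K[X]} {a b : ℕ}
    (hf : f.natDegree ≤ a) (hg : g.natDegree ≤ b) :
    (f * g).coeff (a + b) = f.coeff a * g.coeff b := by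
  rw [Polynomial.coeff_mul]
  rw [Finset.sum_eq_single (a, b)]
  · intro p hp hne
    rcases lt_or_ge a p.1 with h | h
    · rw [Polynomial.coeff_eq_zero_of_natDegree_lt (lt_of_le_of_lt hf h), zero_mul]
    · have : b < p.2 := by
        have := Finset.HasAntidiagonal.mem_antidiagonal.mp hp
        rcases lt_or_ge b p.2 with h2 | h2
        · exact h2
        · exact absurd (Prod.ext (by omega) (by omega)) hne
      rw [Polynomial.coeff_eq_zero_of_natDegree_lt (lt_of_le_of_lt hg this), mul_zero]
  · intro h
    simp at h

noncomputable def repAux (K : Type*) [Field K] (n : ℕ) :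
    (Polynomial K ⧸ Ideal.span {(X : Polynomial K) ^ n}) →ₗ[K] Polynomial K :=
  AdjoinRoot.modByMonicHom (monic_X_pow n)

lemma repAux_mk {K : Type*} [Field K] (n : ℕ) (f : Polynomial K) :
    repAux K n (Ideal.Quotient.mk _ f) = f %ₘ X ^ n :=
  AdjoinRoot.modByMonicHom_mk (monic_X_pow n) f

lemma mk_modByMonic {K : Type*} [Field K] (n : ℕ) (f : Polynomial K) :
    Ideal.Quotient.mk (Ideal.span {(X : Polynomial K) ^ n}) (f %ₘ X ^ n)
      = Ideal.Quotient.mk _ f := by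
  rw [Ideal.Quotient.mk_eq_mk_iff_sub_mem]
  have h := Polynomial.modByMonic_add_div f ((X : Polynomial K) ^ n)
  have : f %ₘ X ^ n - f = -(X ^ n * (f /ₘ X ^ n)) := by linear_combination h
  rw [this]
  exact neg_mem (Ideal.mem_span_singleton.mpr ⟨_, rfl⟩)

lemma smul_mk {K : Type*} [Field K] {I : Ideal (Polynomial K)} (c : K) (b : Polynomial K) :
    Ideal.Quotient.mk I (C c * b) = c • Ideal.Quotient.mk I b := by
  rw [← Polynomial.smul_eq_C_mul]
  exact map_smul (Ideal.Quotient.mkₐ K I) c b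

theorem main (q n : ℕ) (hn : 1 ≤ n) (hq : 2 * n - 2 ≤ q)
    (K : Type*) [Field K] [Fintype K] (hcard : Fintype.card K = q) :
    sInf {N : ℕ∞ | ∃ (k : ℕ) (φ : Fin k → ((Polynomial K ⧸ Ideal.span {(X : Polynomial K) ^ n}) →ₗ[K] K))
        (w : Fin k → (Polynomial K ⧸ Ideal.span {(X : Polynomial K) ^ n})),
      N = k ∧ ∀ x y, (LinearMap.mul K _) x y = ∑ i, (φ i x * φ i y) • w i}
      ≤ ((2 * n - 1 : ℕ) : ℕ∞) := by
  set m := 2 * n - 2 with hm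
  have hcard' : Fintype.card (Fin m) ≤ Fintype.card K := by
    rw [Fintype.card_fin, hcard]; omega
  obtain ⟨e⟩ := Function.Embedding.nonempty_of_card_le hcard'
  set v : Fin m → K := ⇑e with hv
  have hvinj : Function.Injective v := e.injective
  set I := Ideal.span {(X : Polynomial K) ^ n} with hI
  set rep := repAux K n with hrep
  refine sInf_le ⟨m + 1,
    Fin.snoc (fun i => Polynomial.leval (v i) ∘ₗ rep) (Polynomial.lcoeff K (n - 1) ∘ₗ rep),
    Fin.snoc (fun i => Ideal.Quotient.mk I (Lagrange.basis Finset.univ v i))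
      (Ideal.Quotient.mk I (Lagrange.nodal Finset.univ v)), ?_, ?_⟩
  · exact_mod_cast congrArg (Nat.cast : ℕ → ℕ∞) (by omega)
  · intro x y
    obtain ⟨f, rfl⟩ := Ideal.Quotient.mk_surjective x
    obtain ⟨g, rfl⟩ := Ideal.Quotient.mk_surjective y
    set F := f %ₘ X ^ n with hF
    set G := g %ₘ X ^ n with hG
    have hFd : F.natDegree ≤ n - 1 := by
      by_cases h0 : F = 0
      · simp [h0]
      · have := Polynomial.degree_modByMonic_lt f (monic_X_pow (R := K) n)
        rw [Polynomial.degree_X_pow] at this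
        have := (Polynomial.natDegree_lt_iff_degree_lt h0).mpr this
        omega
    have hGd : G.natDegree ≤ n - 1 := by
      by_cases h0 : G = 0
      · simp [h0]
      · have := Polynomial.degree_modByMonic_lt g (monic_X_pow (R := K) n)
        rw [Polynomial.degree_X_pow] at this
        have := (Polynomial.natDegree_lt_iff_degree_lt h0).mpr this
        omega
    have hpd : (F * G).natDegree ≤ m :=
      le_trans (Polynomial.natDegree_mul_le) (by omega)
    have key := interp_aux m v hvinj (F * G) hpd
    have hcoeff : (F * G).coeff m = F.coeff (n - 1) * G.coeff (n - 1) := by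
      have : m = (n - 1) + (n - 1) := by omega
      rw [this]
      exact coeff_mul_top hFd hGd
    have hmul : (LinearMap.mul K (Polynomial K ⧸ I)) (Ideal.Quotient.mk I f) (Ideal.Quotient.mk I g)
        = Ideal.Quotient.mk I (F * G) := by
      rw [LinearMap.mul_apply', map_mul, mk_modByMonic, mk_modByMonic]
    have hrf : repAux K n (Ideal.Quotient.mk I f) = F := repAux_mk n f
    have hrg : repAux K n (Ideal.Quotient.mk I g) = G := repAux_mk n g
    rw [hmul, key, map_add, map_sum, Fin.sum_univ_castSucc]
    simp only [Fin.snoc_castSucc, Fin.snoc_last, LinearMap.comp_apply, hrep, repAux_mk,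
      Polynomial.leval_apply, Polynomial.lcoeff_apply, hrf, hrg]
    congr 1
    · refine Finset.sum_congr rfl fun i _ => ?_
      rw [smul_mk, Polynomial.eval_mul]
    · rw [smul_mk, hcoeff]
end Stmt12Aux


/-- Symmetric bilinear complexity `S_K(t)` (valued in `ℕ∞`). -/
noncomputable def Ssym (K : Type*) [Field K] (V W : Type*) [AddCommGroup V] [Module K V]
    [AddCommGroup W] [Module K W] (t : V →ₗ[K] V →ₗ[K] W) : ℕ∞ :=
  sInf {N : ℕ∞ | ∃ (k : ℕ) (φ : Fin k → (V →ₗ[K] K)) (w : Fin k → W),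
    N = k ∧ ∀ x y, t x y = ∑ i, (φ i x * φ i y) • w i}

/-- If `K` has `q ≥ 2n − 2` elements, the symmetric bilinear complexity of
multiplication in `K[x]/(x^n)` is at most `2n − 1`. -/
theorem stmt12 (q n : ℕ) (hn : 1 ≤ n) (hq : 2 * n - 2 ≤ q)
    (K : Type*) [Field K] [Fintype K] (hcard : Fintype.card K = q) :
    Ssym K (Polynomial K ⧸ Ideal.span {(Polynomial.X : Polynomial K) ^ n})
        (Polynomial K ⧸ Ideal.span {(Polynomial.X : Polynomial K) ^ n})
        (LinearMap.mul K (Polynomial K ⧸ Ideal.span {(Polynomial.X : Polynomial K) ^ n}))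
      ≤ ((2 * n - 1 : ℕ) : ℕ∞) := by
  exact Stmt12Aux.main q n hn hq K hcard
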